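/- In a medium, two states P and Q satisfy: their token contents have equal cardinality always, and their token contents are equal if and only if P = Q. -/

import Mathlib

variable {S : Type*}

/-- Result of applying message `m` (a list of tokens) to state `P`. -/
def mApply (m : List (S → S)) (P : S) : S := m.foldl (fun s τ => τ s) P

/-- `τ'` is a reverse of `τ`. -/
def IsReverse (τ τ' : S → S) : Prop := ∀ P Q : S, P ≠ Q → (τ P = Q ↔ τ' Q = P)

/-- `(S, T)` is a token system. -/
def IsTokenSystem (T : Set (S → S)) : Prop :=
  Nontrivial S ∧ T.Nonempty ∧ ∀ τ ∈ T, τ ≠ id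

/-- `m` is a message of the token system with token set `T`. -/
def IsMsg (T : Set (S → S)) (m : List (S → S)) : Prop := ∀ τ ∈ m, τ ∈ T

/-- `m` is stepwise effective for `P`. -/
def StepwiseEff : List (S → S) → S → Prop
  | [], _ => True
  | τ :: rest, P => τ P ≠ P ∧ StepwiseEff rest (τ P)

/-- `m` is consistent: it contains no token together with a reverse of it. -/
def Consistent (m : List (S → S)) : Prop :=
  ∀ τ ∈ m, ∀ τ' ∈ m, ¬ IsReverse τ τ'

/-- `m` is concise for `P`. -/
def Concise (T : Set (S → S)) (m : List (S → S)) (P : S) : Prop :=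
  IsMsg T m ∧ Consistent m ∧ StepwiseEff m P ∧ m.Nodup

/-- `m` is a return message for `P`. -/
def IsReturn (m : List (S → S)) (P : S) : Prop :=
  StepwiseEff m P ∧ mApply m P = P

/-- `m` is vacuous: its indices partition into pairs of mutually reverse tokens. -/
def Vacuous (m : List (S → S)) : Prop :=
  ∃ σ : Equiv.Perm (Fin m.length),
    (∀ i, σ i ≠ i) ∧ (∀ i, σ (σ i) = i) ∧
    ∀ i, IsReverse (m.get i) (m.get (σ i))

/-- `(S, T)` is a medium: token system satisfying [Ma] and [Mb]. -/
def IsMedium (T : Set (S → S)) : Prop :=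
  IsTokenSystem T ∧
  (∀ P Q : S, P ≠ Q → ∃ m, Concise T m P ∧ mApply m P = Q) ∧
  (∀ (m : List (S → S)) (P : S), IsMsg T m → IsReturn m P → Vacuous m)

/-- Content of a message: its set of tokens. -/
def msgContent (m : List (S → S)) : Set (S → S) := {τ | τ ∈ m}

/-- Token content of a state `P`. -/
def SContent (T : Set (S → S)) (P : S) : Set (S → S) :=
  {τ | ∃ (V : S) (m : List (S → S)), Concise T m V ∧ mApply m V = P ∧ τ ∈ m}

/-- `mr` is the reverse message `τ̃ₙ…τ̃₁` of `m = τ₁…τₙ`. -/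
def IsReverseOfMsg (m mr : List (S → S)) : Prop :=
  List.Forall₂ (fun τ τ' => IsReverse τ τ' ∧ IsReverse τ' τ) m mr.reverse


section Aux
variable {S : Type*} {T : Set (S → S)}

theorem mApply_nil (P : S) : mApply [] P = P := rfl
theorem mApply_cons (τ : S → S) (m : List (S → S)) (P : S) :
    mApply (τ :: m) P = mApply m (τ P) := rfl
theorem mApply_append (m n : List (S → S)) (P : S) :
    mApply (m ++ n) P = mApply n (mApply m P) := List.foldl_append

theorem stepwiseEff_append {m n : List (S → S)} {P : S} :
    StepwiseEff (m ++ n) P ↔ StepwiseEff m P ∧ StepwiseEff n (mApply m P) := by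
  induction m generalizing P with
  | nil => simp [StepwiseEff, mApply_nil]
  | cons τ t ih =>
    simp only [List.cons_append, StepwiseEff, List.append_eq, ih, mApply_cons, and_assoc]

theorem reverse_right_unique {a x y : S → S} (h1 : IsReverse a x) (h2 : IsReverse a y) :
    x = y := by
  funext B
  by_cases hy : y B = B
  · by_cases hx : x B = B
    · rw [hx, hy]
    · exact ((h2 (x B) B hx).mp ((h1 (x B) B hx).mpr rfl)).symm
  · exact (h1 (y B) B hy).mp ((h2 (y B) B hy).mpr rfl)

theorem reverse_left_unique {x y b : S → S} (h1 : IsReverse x b) (h2 : IsReverse y b) :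
    x = y := by
  funext A
  by_cases hx : x A = A
  · by_cases hy : y A = A
    · rw [hx, hy]
    · exact (h1 A (y A) (Ne.symm hy)).mpr ((h2 A (y A) (Ne.symm hy)).mp rfl)
  · exact ((h2 A (x A) (Ne.symm hx)).mpr ((h1 A (x A) (Ne.symm hx)).mp rfl)).symm

end Aux

section Med
variable {S : Type*} {T : Set (S → S)}

theorem vacuous_pair {u : List (S → S)} (hv : Vacuous u) (i : Fin u.length) :
    ∃ j : Fin u.length, j ≠ i ∧ IsReverse (u.get i) (u.get j) ∧ IsReverse (u.get j) (u.get i) := by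
  obtain ⟨σ, hne, hinv, hrev⟩ := hv
  refine ⟨σ i, hne i, hrev i, ?_⟩
  have := hrev (σ i)
  rwa [hinv i] at this

theorem exists_reverse (hM : IsMedium T) {τ : S → S} (hτ : τ ∈ T) {P : S} (hP : τ P ≠ P) :
    ∃ τ' ∈ T, IsReverse τ τ' ∧ IsReverse τ' τ := by
  obtain ⟨m, hm, hmA⟩ := hM.2.1 (τ P) P hP
  set u := τ :: m with hu
  have msg : IsMsg T u := by
    intro x hx
    rcases List.mem_cons.mp hx with h | h
    · exact h ▸ hτ
    · exact hm.1 x h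
  have ret : IsReturn u P := ⟨⟨hP, hm.2.2.1⟩, by rw [hu, mApply_cons, hmA]⟩
  have hv := hM.2.2 u P msg ret
  have hl : 0 < u.length := by simp [hu]
  obtain ⟨j, _, h1, h2⟩ := vacuous_pair hv ⟨0, hl⟩
  have h0 : u.get ⟨0, hl⟩ = τ := rfl
  rw [h0] at h1 h2
  exact ⟨u.get j, msg _ (List.get_mem u j), h1, h2⟩

theorem not_self_reverse (hM : IsMedium T) {τ : S → S} (hτ : τ ∈ T) : ¬ IsReverse τ τ := by
  intro h
  have hne : τ ≠ id := hM.1.2.2 τ hτ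
  obtain ⟨A, hA⟩ : ∃ A, τ A ≠ A := by
    by_contra hc
    push_neg at hc
    exact hne (funext hc)
  have hBA : τ (τ A) = A := (h A (τ A) (Ne.symm hA)).mp rfl
  obtain ⟨m, hm, hmA⟩ := hM.2.1 (τ A) A (Ne.symm hA ∘ Eq.symm)
  have msg : IsMsg T (m ++ [τ]) := by
    intro x hx
    rcases List.mem_append.mp hx with hx | hx
    · exact hm.1 x hx
    · rw [List.mem_singleton.mp hx]; exact hτ
  have ret : IsReturn (m ++ [τ]) (τ A) := by
    constructor
    · rw [stepwiseEff_append]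
      exact ⟨hm.2.2.1, by rw [hmA]; exact ⟨hA, trivial⟩⟩
    · rw [mApply_append, hmA]; rfl
  have hv := hM.2.2 (m ++ [τ]) (τ A) msg ret
  have hl : m.length < (m ++ [τ]).length := by simp
  obtain ⟨j, hj, h1, h2⟩ := vacuous_pair hv ⟨m.length, hl⟩
  have hlast : (m ++ [τ]).get ⟨m.length, hl⟩ = τ := by
    simp [List.get_eq_getElem]
  rw [hlast] at h1 h2
  have hjm : (j : ℕ) < m.length := by
    have h2' := j.2
    simp at h2'
    rcases Nat.lt_or_eq_of_le h2' with hlt | heq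
    · exact hlt
    · exact absurd (Fin.ext heq) hj
  have hget : (m ++ [τ]).get j = m.get ⟨j, hjm⟩ := by
    simp [List.get_eq_getElem, List.getElem_append_left hjm]
  have hjτ : (m ++ [τ]).get j = τ := reverse_left_unique h2 h
  rw [hget] at hjτ
  have hmem : τ ∈ m := by rw [← hjτ]; exact List.get_mem m ⟨j.1, hjm⟩
  exact hm.2.1 τ hmem τ hmem h

theorem concise_ne {m : List (S → S)} {P : S} (hM : IsMedium T) (hm : Concise T m P)
    (hne : m ≠ []) : mApply m P ≠ P := by
  intro h
  have hv := hM.2.2 m P hm.1 ⟨hm.2.2.1, h⟩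
  have hl : 0 < m.length := List.length_pos_iff.mpr hne
  obtain ⟨j, _, h1, _⟩ := vacuous_pair hv ⟨0, hl⟩
  exact hm.2.1 _ (List.get_mem m ⟨0, hl⟩) _ (List.get_mem m j) h1

theorem mem_content (hM : IsMedium T) {τ : S → S} (hτ : τ ∈ T) {A : S} (hA : τ A ≠ A) :
    τ ∈ SContent T (τ A) := by
  refine ⟨A, [τ], ⟨?_, ?_, ⟨hA, trivial⟩, List.nodup_singleton τ⟩, rfl, List.mem_singleton.mpr rfl⟩
  · intro x hx; rw [List.mem_singleton.mp hx]; exact hτ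
  · intro x hx y hy
    rw [List.mem_singleton.mp hx, List.mem_singleton.mp hy]
    exact not_self_reverse hM hτ

theorem content_sub {P : S} {τ : S → S} (h : τ ∈ SContent T P) : τ ∈ T := by
  obtain ⟨V, m, hm, _, hτm⟩ := h
  exact hm.1 τ hτm

end Med

section Rev
variable {S : Type*} {T : Set (S → S)}

/-- The mutual-reverse pairing relation. -/
def RevRel : (S → S) → (S → S) → Prop := fun τ τ' => IsReverse τ τ' ∧ IsReverse τ' τ

theorem forall₂_mem_right {l₁ l₂ : List (S → S)} (h : List.Forall₂ (RevRel (S := S)) l₁ l₂)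
    {b : S → S} (hb : b ∈ l₂) : ∃ a ∈ l₁, RevRel a b := by
  induction h with
  | nil => simp at hb
  | cons h1 h2 ih =>
    rcases List.mem_cons.mp hb with h | h
    · exact ⟨_, List.mem_cons_self, h ▸ h1⟩
    · obtain ⟨a, ha, hr⟩ := ih h
      exact ⟨a, List.mem_cons_of_mem _ ha, hr⟩

theorem forall₂_mem_left {l₁ l₂ : List (S → S)} (h : List.Forall₂ (RevRel (S := S)) l₁ l₂)
    {a : S → S} (ha : a ∈ l₁) : ∃ b ∈ l₂, RevRel a b := by
  induction h with
  | nil => simp at ha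
  | cons h1 h2 ih =>
    rcases List.mem_cons.mp ha with h | h
    · exact ⟨_, List.mem_cons_self, h ▸ h1⟩
    · obtain ⟨b, hb, hr⟩ := ih h
      exact ⟨b, List.mem_cons_of_mem _ hb, hr⟩

theorem forall₂_nodup {l₁ l₂ : List (S → S)} (h : List.Forall₂ (RevRel (S := S)) l₁ l₂)
    (hn : l₁.Nodup) : l₂.Nodup := by
  induction h with
  | nil => exact List.nodup_nil
  | @cons a b l₁' l₂' h1 h2 ih =>
    rw [List.nodup_cons] at hn ⊢
    refine ⟨?_, ih hn.2⟩
    intro hb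
    obtain ⟨a', ha', hr⟩ := forall₂_mem_right h2 hb
    have : a' = a := reverse_left_unique hr.1 h1.1
    exact hn.1 (this ▸ ha')

open Classical in
theorem forall₂_count {l₁ l₂ : List (S → S)} (h : List.Forall₂ (RevRel (S := S)) l₁ l₂)
    {a b : S → S} (hab : IsReverse a b) (hba : IsReverse b a) :
    l₁.count a = l₂.count b := by
  induction h with
  | nil => rfl
  | @cons x y l₁' l₂' h1 h2 ih =>
    rw [List.count_cons, List.count_cons, ih]
    congr 1
    have hxy : x = a ↔ y = b := by
      constructor
      · intro hx
        exact reverse_right_unique (hx ▸ h1.1) hab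
      · intro hy
        exact reverse_left_unique (hy ▸ h1.1 : IsReverse x b) hab
    simp only [beq_iff_eq]
    by_cases hx : x = a
    · rw [if_pos hx, if_pos (hxy.mp hx)]
    · rw [if_neg hx, if_neg (fun hy => hx (hxy.mpr hy))]

theorem exists_reverse_msg (hM : IsMedium T) :
    ∀ (m : List (S → S)) (P : S), IsMsg T m → StepwiseEff m P →
      ∃ mr, IsMsg T mr ∧ StepwiseEff mr (mApply m P) ∧ mApply mr (mApply m P) = P ∧
        List.Forall₂ (RevRel (S := S)) m mr.reverse := by
  intro m
  induction m with
  | nil => exact fun P _ _ => ⟨[], fun x hx => absurd hx List.not_mem_nil, trivial, rfl, List.Forall₂.nil⟩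
  | cons τ t ih =>
    intro P hmsg hse
    obtain ⟨hP, hset⟩ := hse
    obtain ⟨tr, htrmsg, htrse, htrap, htrf⟩ := ih (τ P) (fun x hx => hmsg x (List.mem_cons_of_mem _ hx)) hset
    obtain ⟨τ', hτ'T, hab, hba⟩ := exists_reverse hM (hmsg τ (List.mem_cons_self)) hP
    have hτ'P : τ' (τ P) = P := (hab P (τ P) (Ne.symm hP)).mp rfl
    refine ⟨tr ++ [τ'], ?_, ?_, ?_, ?_⟩
    · intro x hx
      rcases List.mem_append.mp hx with hx | hx
      · exact htrmsg x hx
      · rw [List.mem_singleton.mp hx]; exact hτ'T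
    · rw [mApply_cons, stepwiseEff_append]
      refine ⟨htrse, ?_⟩
      rw [htrap]
      exact ⟨hτ'P.trans_ne (Ne.symm hP), trivial⟩
    · rw [mApply_cons, mApply_append, htrap]
      exact hτ'P
    · rw [List.reverse_append, List.reverse_singleton]
      exact List.Forall₂.cons ⟨hab, hba⟩ htrf

theorem exists_reverse_concise (hM : IsMedium T) {m : List (S → S)} {P : S}
    (hm : Concise T m P) :
    ∃ mr, Concise T mr (mApply m P) ∧ mApply mr (mApply m P) = P ∧
      List.Forall₂ (RevRel (S := S)) m mr.reverse := by
  obtain ⟨mr, hmsg, hse, hap, hf⟩ := exists_reverse_msg hM m P hm.1 hm.2.2.1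
  refine ⟨mr, ⟨hmsg, ?_, hse, ?_⟩, hap, hf⟩
  · intro x hx y hy hrev
    obtain ⟨a, ha, hra⟩ := forall₂_mem_right hf (List.mem_reverse.mpr hx)
    obtain ⟨b, hb, hrb⟩ := forall₂_mem_right hf (List.mem_reverse.mpr hy)
    have hxb : x = b := reverse_left_unique hrev hrb.1
    exact hm.2.1 a ha x (by rw [hxb]; exact hb) hra.1
  · exact List.nodup_reverse.mp (forall₂_nodup hf hm.2.2.2)

end Rev

section Count
variable {S : Type*} {T : Set (S → S)}
open Classical

theorem count_eq_card_aux {α : Type*} [DecidableEq α] (l : List α) (a : α) :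
    l.count a = (Finset.univ.filter fun i : Fin l.length => l.get i = a).card := by
  have h1 : l.count a = ((List.finRange l.length).map l.get).count a := by
    rw [List.map_get_finRange]
  rw [h1, Fin.univ_def]
  simp only [Finset.filter, Finset.card]
  rw [List.count, List.countP_map, List.countP_eq_length_filter]
  congr 1

open Classical in
theorem vacuous_count {u : List (S → S)} (hv : Vacuous u) {a b : S → S}
    (hab : IsReverse a b) (hba : IsReverse b a) : u.count a = u.count b := by
  obtain ⟨σ, hne, hinv, hrev⟩ := hv
  rw [count_eq_card_aux, count_eq_card_aux]
  refine Finset.card_bij' (fun i _ => σ i) (fun i _ => σ i) ?_ ?_ ?_ ?_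
  · intro i hi
    rw [Finset.mem_filter] at hi ⊢
    refine ⟨Finset.mem_univ _, ?_⟩
    have := hrev i
    rw [hi.2] at this
    exact reverse_right_unique this hab
  · intro i hi
    rw [Finset.mem_filter] at hi ⊢
    refine ⟨Finset.mem_univ _, ?_⟩
    have := hrev i
    rw [hi.2] at this
    exact reverse_right_unique this hba
  · intro i _; exact hinv i
  · intro i _; exact hinv i

open Classical in
theorem not_both_content (hM : IsMedium T) {X : S} {a b : S → S}
    (ha : a ∈ SContent T X) (hb : b ∈ SContent T X)
    (hab : IsReverse a b) (hba : IsReverse b a) : False := by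
  obtain ⟨V, n, hn, hnX, han⟩ := ha
  obtain ⟨W, p, hp, hpX, hbp⟩ := hb
  -- reverse of p : a concise message from X to W containing a
  obtain ⟨r, hr, hrap, hrf⟩ := exists_reverse_concise hM hp
  rw [hpX] at hr hrap
  have har : a ∈ r := by
    obtain ⟨x, hx, hrx⟩ := forall₂_mem_left hrf hbp
    have : x = a := reverse_right_unique hrx.1 hba
    exact List.mem_reverse.mp (this ▸ hx)
  have hbn : b ∉ n := fun h => hn.2.1 a han b h hab
  have hbr : b ∉ r := fun h => hr.2.1 a har b h hab
  -- counts
  have hca_n : 1 ≤ n.count a := List.count_pos_iff.mpr han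
  have hca_r : 1 ≤ r.count a := List.count_pos_iff.mpr har
  have hcb_n : n.count b = 0 := List.count_eq_zero.mpr hbn
  have hcb_r : r.count b = 0 := List.count_eq_zero.mpr hbr
  by_cases hVW : V = W
  · -- n ++ r is a return message for V
    have hse : StepwiseEff (n ++ r) V := by
      rw [stepwiseEff_append, hnX]
      exact ⟨hn.2.2.1, hr.2.2.1⟩
    have hret : IsReturn (n ++ r) V := by
      refine ⟨hse, ?_⟩
      rw [mApply_append, hnX, hrap, hVW]
    have hmsg : IsMsg T (n ++ r) := by
      intro x hx
      rcases List.mem_append.mp hx with h | h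
      · exact hn.1 x h
      · exact hr.1 x h
    have hv := hM.2.2 _ _ hmsg hret
    have := vacuous_count hv hab hba
    rw [List.count_append, List.count_append, hcb_n, hcb_r] at this
    omega
  · obtain ⟨q, hq, hqVW⟩ := hM.2.1 V W hVW
    obtain ⟨qr, hqr, hqrap, hqrf⟩ := exists_reverse_concise hM hq
    rw [hqVW] at hqr hqrap
    have hse : StepwiseEff (n ++ r ++ qr) V := by
      rw [stepwiseEff_append, stepwiseEff_append, hnX, mApply_append, hnX, hrap]
      exact ⟨⟨hn.2.2.1, hr.2.2.1⟩, hqr.2.2.1⟩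
    have hret : IsReturn (n ++ r ++ qr) V := by
      refine ⟨hse, ?_⟩
      rw [mApply_append, mApply_append, hnX, hrap, hqrap]
    have hmsg : IsMsg T (n ++ r ++ qr) := by
      intro x hx
      rcases List.mem_append.mp hx with h | h
      · rcases List.mem_append.mp h with h | h
        · exact hn.1 x h
        · exact hr.1 x h
      · exact hqr.1 x h
    have hv := hM.2.2 _ _ hmsg hret
    have hcnt := vacuous_count hv hab hba
    have hqq : q.count a = qr.count b := by
      have := forall₂_count hqrf hab hba
      rwa [List.count_reverse] at this
    have hq1 : q.count a ≤ 1 := List.nodup_iff_count_le_one.mp hq.2.2.2 a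
    rw [List.count_append, List.count_append, List.count_append, List.count_append,
      hcb_n, hcb_r] at hcnt
    omega

end Count

section Final
variable {S : Type*} {T : Set (S → S)}

theorem mem_content_or (hM : IsMedium T) {τ τ' : S → S} (hτ : τ ∈ T)
    (hab : IsReverse τ τ') (hba : IsReverse τ' τ) (X : S) :
    τ ∈ SContent T X ∨ τ' ∈ SContent T X := by
  obtain ⟨A, hA⟩ : ∃ A, τ A ≠ A := by
    by_contra hc
    push_neg at hc
    exact hM.1.2.2 τ hτ (funext hc)
  by_cases hXB : X = τ A
  · exact Or.inl (hXB ▸ mem_content hM hτ hA)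
  · obtain ⟨m, hm, hmX⟩ := hM.2.1 (τ A) X (fun h => hXB h.symm)
    by_cases hτm : τ ∈ m
    · exact Or.inl ⟨τ A, m, hm, hmX, hτm⟩
    · by_cases hτ'm : τ' ∈ m
      · exact Or.inr ⟨τ A, m, hm, hmX, hτ'm⟩
      · refine Or.inl ⟨A, τ :: m, ⟨?_, ?_, ⟨hA, hm.2.2.1⟩, ?_⟩, ?_, List.mem_cons_self⟩
        · intro x hx
          rcases List.mem_cons.mp hx with h | h
          · exact h ▸ hτ
          · exact hm.1 x h
        · intro x hx y hy hrev
          rcases List.mem_cons.mp hx with hx' | hx' <;> rcases List.mem_cons.mp hy with hy' | hy'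
          · rw [hx', hy'] at hrev
            exact not_self_reverse hM hτ hrev
          · subst hx'
            exact hτ'm ((reverse_right_unique hrev hab).symm ▸ hy')
          · subst hy'
            exact hτ'm ((reverse_left_unique hrev hba).symm ▸ hx')
          · exact hm.2.1 x hx' y hy' hrev
        · rw [List.nodup_cons]
          exact ⟨hτm, hm.2.2.2⟩
        · rw [mApply_cons, hmX]

open Classical in
/-- A chosen mutual reverse of a token. -/
noncomputable def revTok (T : Set (S → S)) (τ : S → S) : S → S :=
  if h : ∃ τ', τ' ∈ T ∧ IsReverse τ τ' ∧ IsReverse τ' τ then h.choose else id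

theorem revTok_spec (hM : IsMedium T) {τ : S → S} (hτ : τ ∈ T) :
    revTok T τ ∈ T ∧ IsReverse τ (revTok T τ) ∧ IsReverse (revTok T τ) τ := by
  classical
  obtain ⟨A, hA⟩ : ∃ A, τ A ≠ A := by
    by_contra hc
    push_neg at hc
    exact hM.1.2.2 τ hτ (funext hc)
  obtain ⟨τ', hτ'T, hab, hba⟩ := exists_reverse hM hτ hA
  have h : ∃ τ', τ' ∈ T ∧ IsReverse τ τ' ∧ IsReverse τ' τ := ⟨τ', hτ'T, hab, hba⟩
  rw [revTok, dif_pos h]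
  exact h.choose_spec

theorem revTok_revTok (hM : IsMedium T) {τ : S → S} (hτ : τ ∈ T) :
    revTok T (revTok T τ) = τ := by
  obtain ⟨h1, h2, h3⟩ := revTok_spec hM hτ
  obtain ⟨h4, h5, h6⟩ := revTok_spec hM h1
  exact reverse_right_unique h5 h3

open Classical in
noncomputable def contentMap (hM : IsMedium T) (P Q : S) :
    ↥(SContent T P) → ↥(SContent T Q) := fun x =>
  if h : (x : S → S) ∈ SContent T Q then ⟨x, h⟩
  else ⟨revTok T x, by
    have hT : (x : S → S) ∈ T := content_sub x.2
    obtain ⟨h1, h2, h3⟩ := revTok_spec hM hT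
    rcases mem_content_or hM hT h2 h3 Q with hc | hc
    · exact absurd hc h
    · exact hc⟩

theorem contentMap_comp (hM : IsMedium T) (P Q : S) (x : ↥(SContent T P)) :
    contentMap hM Q P (contentMap hM P Q x) = x := by
  classical
  by_cases h : (x : S → S) ∈ SContent T Q
  · apply Subtype.ext
    simp only [contentMap, dif_pos h, dif_pos x.2]
  · apply Subtype.ext
    have hT : (x : S → S) ∈ T := content_sub x.2
    have hnp : revTok T (x : S → S) ∉ SContent T P := by
      intro hc
      obtain ⟨h1, h2, h3⟩ := revTok_spec hM hT
      exact not_both_content hM x.2 hc h2 h3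
    simp only [contentMap, dif_neg h, dif_neg hnp]
    exact revTok_revTok hM hT

theorem stmt7' {T : Set (S → S)} (hM : IsMedium T) (P Q : S) :
    Cardinal.mk (SContent T P) = Cardinal.mk (SContent T Q) ∧
    (SContent T P = SContent T Q ↔ P = Q) := by
  constructor
  · exact Cardinal.mk_congr
      ⟨contentMap hM P Q, contentMap hM Q P, contentMap_comp hM P Q, contentMap_comp hM Q P⟩
  · constructor
    · intro h
      by_contra hPQ
      obtain ⟨m, hm, hmQ⟩ := hM.2.1 P Q hPQ
      cases m with
      | nil => exact hPQ hmQ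
      | cons τ t =>
        have hτP : τ P ≠ P := hm.2.2.1.1
        have hτT : τ ∈ T := hm.1 τ (List.mem_cons_self)
        have hτQ : τ ∈ SContent T Q := ⟨P, τ :: t, hm, hmQ, List.mem_cons_self⟩
        have hτP' : τ ∈ SContent T P := h ▸ hτQ
        obtain ⟨τ', hτ'T, hab, hba⟩ := exists_reverse hM hτT hτP
        have hτ'P : τ' ∈ SContent T P := by
          have h1 : τ' (τ P) = P := (hab P (τ P) (Ne.symm hτP)).mp rfl
          have h2 := mem_content hM hτ'T (A := τ P) (h1.trans_ne (Ne.symm hτP))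
          rwa [h1] at h2
        exact not_both_content hM hτP' hτ'P hab hba
    · rintro rfl; rfl

end Final

/-- In a medium, the token contents of any two states have the same cardinality,
and the contents of two states are equal iff the states are equal. -/
theorem stmt7 {T : Set (S → S)} (hM : IsMedium T) (P Q : S) :
    Cardinal.mk (SContent T P) = Cardinal.mk (SContent T Q) ∧
    (SContent T P = SContent T Q ↔ P = Q) := stmt7' hM P Q
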